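/- Let d ≥ 1, m ≠ 0, λ ≥ 0. For every l ∈ ℕ₀ and every x ∈ ℕ with x ≥ 1, there exists a constant B ≥ 0 such that for all k > 0: sup_{p,q,r ∈ ℝ^d} |∂_k^l κ₄(p,q,r;k)| ≤ B · |m|^{4−d} · k^x / (k + |m|)^{x+l}. -/

import Mathlib

open Polynomial in
noncomputable def Qpoly : ℕ → Polynomial ℝ
  | 0 => 1
  | (l+1) => X * (Qpoly l - (Qpoly l).derivative) - (l : ℝ) • Qpoly l

lemma Qpoly_natDegree_le (l : ℕ) : (Qpoly l).natDegree ≤ l := by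
  induction l with
  | zero => simp [Qpoly]
  | succ l ih =>
    rw [Qpoly]
    refine le_trans (Polynomial.natDegree_sub_le _ _) (max_le ?_ ?_)
    · refine le_trans (Polynomial.natDegree_mul_le) ?_
      have h1 : (Qpoly l - (Qpoly l).derivative).natDegree ≤ l :=
        le_trans (Polynomial.natDegree_sub_le _ _)
          (max_le ih (le_trans (Polynomial.natDegree_derivative_le _)
            (le_trans (Nat.sub_le _ _) ih)))
      simpa [Polynomial.natDegree_X] using by omega
    · exact le_trans (Polynomial.natDegree_smul_le _ _) (le_trans ih (by omega))

lemma Qpoly_formula (C a : ℝ) (l : ℕ) :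
    ∀ k : ℝ, 0 < k →
    iteratedDeriv l (fun s => C * Real.exp (-(a / s))) k
      = C * ((Qpoly l).eval (a / k) * k ^ (-(l : ℤ)) * Real.exp (-(a / k))) := by
  induction l with
  | zero => intro k hk; simp [Qpoly]
  | succ l ih =>
    intro k hk
    rw [iteratedDeriv_succ]
    have hEq : iteratedDeriv l (fun s => C * Real.exp (-(a / s)))
        =ᶠ[nhds k] fun s => C * ((Qpoly l).eval (a / s) * s ^ (-(l : ℤ)) * Real.exp (-(a / s))) := by
      filter_upwards [isOpen_Ioi.mem_nhds hk] with s hs using ih s hs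
    rw [hEq.deriv_eq]
    have hk0 : k ≠ 0 := hk.ne'
    have h1 : HasDerivAt (fun s : ℝ => a / s) (a * -(k ^ 2)⁻¹) k := by
      simpa [div_eq_mul_inv] using (hasDerivAt_inv hk0).const_mul a
    have h2 : HasDerivAt (fun s : ℝ => (Qpoly l).eval (a / s))
        ((Qpoly l).derivative.eval (a / k) * (a * -(k ^ 2)⁻¹)) k :=
      (Polynomial.hasDerivAt (Qpoly l) (a / k)).comp k h1
    have h3 : HasDerivAt (fun s : ℝ => s ^ (-(l : ℤ)))
        ((-(l : ℤ) : ℝ) * k ^ (-(l : ℤ) - 1)) k := by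
      simpa using hasDerivAt_zpow (-(l : ℤ)) k (Or.inl hk0)
    have h4 : HasDerivAt (fun s : ℝ => Real.exp (-(a / s)))
        (Real.exp (-(a / k)) * -(a * -(k ^ 2)⁻¹)) k :=
      (Real.hasDerivAt_exp _).comp k h1.neg
    have h5 := (((h2.mul h3).mul h4).const_mul C)
    rw [HasDerivAt.deriv (f := fun s => C * (Polynomial.eval (a / s) (Qpoly l) * s ^ (-(l:ℤ)) * Real.exp (-(a / s)))) h5]
    simp only [Qpoly, Polynomial.eval_sub, Polynomial.eval_mul, Polynomial.eval_X,
      Polynomial.eval_smul, smul_eq_mul, Pi.mul_apply]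
    rw [show (-(l : ℤ) - 1) = -((l+1 : ℕ) : ℤ) by push_cast; ring,
      show (-(l : ℤ)) = -((l : ℕ) : ℤ) by rfl, zpow_neg, zpow_neg, zpow_natCast, zpow_natCast,
      pow_succ]
    field_simp
    push_cast
    ring

open Nat in
lemma exp_neg_le_aux (n : ℕ) (t : ℝ) (ht : 0 ≤ t) :
    Real.exp (-t) ≤ Real.exp 1 * n ! / (1 + t) ^ n := by
  have h1 : (0:ℝ) < (1 + t) ^ n := by positivity
  rw [le_div_iff₀ h1]
  have h2 := Real.pow_div_factorial_le_exp (x := 1 + t) (by linarith) n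
  rw [Real.exp_add] at h2
  have h3 : (0:ℝ) < n ! := by positivity
  rw [div_le_iff₀ h3] at h2
  calc Real.exp (-t) * (1 + t) ^ n
      ≤ Real.exp (-t) * (Real.exp 1 * Real.exp t * n !) :=
        mul_le_mul_of_nonneg_left h2 (Real.exp_pos _).le
    _ = Real.exp 1 * n ! := by
        rw [Real.exp_neg]
        field_simp

open Nat in
lemma term_bound (x l j : ℕ) (a k : ℝ) (ha : 0 ≤ a) (hk : 0 < k) :
    (a / k) ^ j * ((k ^ l)⁻¹ * Real.exp (-(a / k)))
      ≤ Real.exp 1 * (x + l + j)! * (k ^ x / (k + a) ^ (x + l)) := by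
  have hka : 0 < k + a := by linarith
  have h1 := exp_neg_le_aux (x + l + j) (a / k) (by positivity)
  have h2 : (1 + a / k) = (k + a) / k := by field_simp
  rw [h2, div_pow, div_div_eq_mul_div] at h1
  calc (a / k) ^ j * ((k ^ l)⁻¹ * Real.exp (-(a / k)))
      ≤ (a / k) ^ j * ((k ^ l)⁻¹ *
          (Real.exp 1 * ↑(x + l + j)! * k ^ (x + l + j) / (k + a) ^ (x + l + j))) := by
        gcongr
    _ = Real.exp 1 * (x + l + j)! * ((a ^ j / (k + a) ^ j) * (k ^ x / (k + a) ^ (x + l))) := by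
        rw [pow_add, pow_add, pow_add (k+a), div_pow]
        field_simp
    _ ≤ Real.exp 1 * (x + l + j)! * (1 * (k ^ x / (k + a) ^ (x + l))) := by
        gcongr
        · exact div_le_one_of_le₀ (pow_le_pow_left₀ ha (by linarith) j) (by positivity)
    _ = Real.exp 1 * (x + l + j)! * (k ^ x / (k + a) ^ (x + l)) := by ring

open Nat Finset in
lemma main_bound (x l : ℕ) (C a μ : ℝ) (hC : 0 ≤ C) (hμ : 0 < μ) (ham : μ ≤ a)
    (k : ℝ) (hk : 0 < k) :
    |iteratedDeriv l (fun s => C * Real.exp (-(a / s))) k|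
      ≤ C * (∑ j ∈ Finset.range (l+1), |(Qpoly l).coeff j| * (Real.exp 1 * (x+l+j)!))
          * (k ^ x / (k + μ) ^ (x + l)) := by
  have ha0 : 0 ≤ a := le_trans hμ.le ham
  have ht : 0 ≤ a / k := by positivity
  rw [Qpoly_formula C a l k hk]
  have hev : |(Qpoly l).eval (a/k)| ≤ ∑ j ∈ range (l+1), |(Qpoly l).coeff j| * (a/k)^j := by
    rw [Polynomial.eval_eq_sum_range' (Nat.lt_succ_of_le (Qpoly_natDegree_le l))]
    refine le_trans (Finset.abs_sum_le_sum_abs _ _) (Finset.sum_le_sum fun j _ => ?_)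
    rw [abs_mul, abs_pow, abs_of_nonneg ht]
  calc |C * ((Qpoly l).eval (a/k) * k ^ (-(l:ℤ)) * Real.exp (-(a/k)))|
      = C * (|(Qpoly l).eval (a/k)| * ((k^l)⁻¹ * Real.exp (-(a/k)))) := by
        rw [abs_mul, abs_mul, abs_mul, abs_of_nonneg hC, abs_of_nonneg (Real.exp_pos _).le,
          zpow_neg, zpow_natCast, abs_of_nonneg (by positivity : (0:ℝ) ≤ (k^l)⁻¹)]
        ring
    _ ≤ C * ((∑ j ∈ range (l+1), |(Qpoly l).coeff j| * (a/k)^j) * ((k^l)⁻¹ * Real.exp (-(a/k)))) := by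
        gcongr
    _ = C * ∑ j ∈ range (l+1), |(Qpoly l).coeff j| * ((a/k)^j * ((k^l)⁻¹ * Real.exp (-(a/k)))) := by
        congr 1
        rw [Finset.sum_mul]
        exact Finset.sum_congr rfl fun j _ => by ring
    _ ≤ C * ∑ j ∈ range (l+1), |(Qpoly l).coeff j| * (Real.exp 1 * (x+l+j)! * (k^x/(k+a)^(x+l))) := by
        refine mul_le_mul_of_nonneg_left (Finset.sum_le_sum fun j _ => ?_) hC
        exact mul_le_mul_of_nonneg_left (term_bound x l j a k ha0 hk) (abs_nonneg _)
    _ ≤ C * ∑ j ∈ range (l+1), |(Qpoly l).coeff j| * (Real.exp 1 * (x+l+j)! * (k^x/(k+μ)^(x+l))) := by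
        refine mul_le_mul_of_nonneg_left (Finset.sum_le_sum fun j _ => ?_) hC
        refine mul_le_mul_of_nonneg_left (mul_le_mul_of_nonneg_left ?_ (by positivity)) (abs_nonneg _)
        gcongr <;> linarith
    _ = C * (∑ j ∈ range (l+1), |(Qpoly l).coeff j| * (Real.exp 1 * (x+l+j)!))
          * (k ^ x / (k + μ) ^ (x + l)) := by
        rw [mul_assoc]
        congr 1
        rw [Finset.sum_mul]
        exact Finset.sum_congr rfl fun j _ => by ring

/-- The four-point function ansatz
`κ₄(p,q,r;k) = λ|m|^{4−d} exp[−(‖p‖^d + ‖q‖^d + ‖r‖^d + ‖p+q+r‖^d + |m|^d)/(k|m|^{d−1})]`. -/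
noncomputable def kappa4 (d : ℕ) (m lam : ℝ) (p q r : EuclideanSpace ℝ (Fin d)) (k : ℝ) : ℝ :=
  lam * |m| ^ ((4 : ℤ) - (d : ℤ)) *
    Real.exp (-((‖p‖ ^ d + ‖q‖ ^ d + ‖r‖ ^ d + ‖p + q + r‖ ^ d + |m| ^ d)
      / (k * |m| ^ ((d : ℤ) - 1))))

open Nat Finset in
theorem stmt_12 (d : ℕ) (hd : 1 ≤ d) (m lam : ℝ) (hm : m ≠ 0) (hlam : 0 ≤ lam)
    (l x : ℕ) (hx : 1 ≤ x) :
    ∃ B : ℝ, 0 ≤ B ∧ ∀ k : ℝ, 0 < k → ∀ p q r : EuclideanSpace ℝ (Fin d),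
      |iteratedDeriv l (fun s => kappa4 d m lam p q r s) k|
        ≤ B * |m| ^ ((4 : ℤ) - (d : ℤ)) * k ^ x / (k + |m|) ^ (x + l) := by
  have hμ : 0 < |m| := abs_pos.mpr hm
  refine ⟨lam * ∑ j ∈ Finset.range (l+1), |(Qpoly l).coeff j| * (Real.exp 1 * (x+l+j)!),
    mul_nonneg hlam (Finset.sum_nonneg fun j _ => by positivity), ?_⟩
  intro k hk p q r
  have hMpos : (0:ℝ) < |m| ^ ((d:ℤ) - 1) := zpow_pos hμ _
  set A : ℝ := ‖p‖ ^ d + ‖q‖ ^ d + ‖r‖ ^ d + ‖p + q + r‖ ^ d + |m| ^ d with hA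
  have hAm : |m| ^ d ≤ A := by
    rw [hA]
    nlinarith [pow_nonneg (norm_nonneg p) d, pow_nonneg (norm_nonneg q) d,
      pow_nonneg (norm_nonneg r) d, pow_nonneg (norm_nonneg (p+q+r)) d]
  have ham : |m| ≤ A / |m| ^ ((d:ℤ) - 1) := by
    rw [le_div_iff₀ hMpos]
    calc |m| * |m| ^ ((d:ℤ) - 1) = |m| ^ (1 + ((d:ℤ) - 1)) := by
          rw [zpow_add₀ hμ.ne', zpow_one]
      _ = |m| ^ (d:ℤ) := by norm_num
      _ = |m| ^ (d:ℕ) := zpow_natCast _ _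
      _ ≤ A := hAm
  have hfun : (fun s => kappa4 d m lam p q r s)
      = fun s => (lam * |m| ^ ((4:ℤ) - (d:ℤ))) * Real.exp (-((A / |m| ^ ((d:ℤ) - 1)) / s)) := by
    funext s
    simp only [kappa4, ← hA]
    rw [div_div, mul_comm (|m| ^ ((d:ℤ) - 1)) s]
  rw [hfun]
  have hC : 0 ≤ lam * |m| ^ ((4:ℤ) - (d:ℤ)) := mul_nonneg hlam (zpow_nonneg (abs_nonneg m) _)
  refine le_trans (main_bound x l _ _ _ hC hμ ham k hk) (le_of_eq ?_)
  ring
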